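/- Let f be a solution of P_III(0,0,4,-4) on ℝ_{>0} taking values in i·ℝ_{>0} (purely imaginary positive). Then ψ = 2 log f - πi (a real-valued branch) satisfies (x·d/dx)²ψ = -16 x² sinh(ψ); and f cannot have any point x₀ with ∂ₓf(x₀) = ±2, so f extends to a real-analytic solution on all of ℝ_{>0} without zeros or poles. -/

import Mathlib

open Complex

/-- Let `f` be a real-analytic solution of `P_III(0,0,4,-4)` on `ℝ_{>0}` with values
in `i·ℝ_{>0}`, and write `f = i·e^{ψ/2}` with `ψ` real-analytic (i.e. `ψ = 2 log f - πi`
is a real-valued branch). Then `ψ` satisfies `(x·d/dx)²ψ = -16·x²·sinh(ψ)`; moreover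
`f` never vanishes and there is no point `x₀ > 0` with `∂ₓf(x₀) = ±2`. -/
theorem stmt14 (f : ℝ → ℂ) (ψ : ℝ → ℝ)
    (hf : ∀ x > (0 : ℝ), AnalyticAt ℝ f x)
    (hψ : ∀ x > (0 : ℝ), AnalyticAt ℝ ψ x)
    (hval : ∀ x > (0 : ℝ), f x = Complex.I * Real.exp (ψ x / 2))
    (hode : ∀ x > (0 : ℝ), iteratedDeriv 2 f x =
      (deriv f x) ^ 2 / f x - deriv f x / (x : ℂ) + 4 * (f x) ^ 3 - 4 / f x) :
    (∀ x > (0 : ℝ), x ^ 2 * iteratedDeriv 2 ψ x + x * deriv ψ x =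
        -16 * x ^ 2 * Real.sinh (ψ x)) ∧
    (∀ x > (0 : ℝ), f x ≠ 0) ∧
    (∀ x > (0 : ℝ), deriv f x ≠ 2 ∧ deriv f x ≠ -2) := by
  -- derivative formula
  have hder : ∀ x > (0:ℝ), deriv f x =
      Complex.I * ((Real.exp (ψ x / 2) * (deriv ψ x / 2) : ℝ) : ℂ) := by
    intro x hx
    have hmem : Set.Ioi (0:ℝ) ∈ nhds x := isOpen_Ioi.mem_nhds hx
    have heq : f =ᶠ[nhds x] (fun t => Complex.I * ((Real.exp (ψ t / 2) : ℝ) : ℂ)) :=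
      Filter.eventuallyEq_of_mem hmem (fun t ht => hval t ht)
    rw [heq.deriv_eq]
    have h1 : HasDerivAt (fun t => Real.exp (ψ t / 2))
        (Real.exp (ψ x / 2) * (deriv ψ x / 2)) x :=
      (((hψ x hx).differentiableAt.hasDerivAt).div_const 2).exp
    have h2 : HasDerivAt (fun t => ((Real.exp (ψ t / 2) : ℝ) : ℂ))
        ((Real.exp (ψ x / 2) * (deriv ψ x / 2) : ℝ) : ℂ) x := h1.ofReal_comp
    exact (h2.const_mul Complex.I).deriv
  have hder2 : ∀ x > (0:ℝ), iteratedDeriv 2 f x =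
      Complex.I * ((Real.exp (ψ x / 2) * (deriv ψ x / 2) * (deriv ψ x / 2)
        + Real.exp (ψ x / 2) * (iteratedDeriv 2 ψ x / 2) : ℝ) : ℂ) := by
    intro x hx
    have hmem : Set.Ioi (0:ℝ) ∈ nhds x := isOpen_Ioi.mem_nhds hx
    have heq : deriv f =ᶠ[nhds x]
        (fun t => Complex.I * ((Real.exp (ψ t / 2) * (deriv ψ t / 2) : ℝ) : ℂ)) :=
      Filter.eventuallyEq_of_mem hmem (fun t ht => hder t ht)
    rw [iteratedDeriv_succ, iteratedDeriv_one, heq.deriv_eq]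
    have h1 : HasDerivAt (fun t => Real.exp (ψ t / 2))
        (Real.exp (ψ x / 2) * (deriv ψ x / 2)) x :=
      (((hψ x hx).differentiableAt.hasDerivAt).div_const 2).exp
    have h2 : HasDerivAt (fun t => deriv ψ t / 2) (iteratedDeriv 2 ψ x / 2) x := by
      have hdψ : DifferentiableAt ℝ (deriv ψ) x :=
        ((hψ x hx).fderiv.differentiableAt.clm_apply (differentiableAt_const 1) :)
      have := (hdψ.hasDerivAt).div_const 2
      rwa [iteratedDeriv_succ, iteratedDeriv_one]
    have h3 := h1.mul h2
    exact ((h3.ofReal_comp).const_mul Complex.I).deriv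
  refine ⟨?_, ?_, ?_⟩
  · intro x hx
    have hE := hode x hx
    rw [hder2 x hx, hder x hx, hval x hx] at hE
    set g := Real.exp (ψ x / 2) with hg
    set p := deriv ψ x with hp
    set q := iteratedDeriv 2 ψ x with hq
    have hg0 : (0:ℝ) < g := Real.exp_pos _
    have hgC : (g:ℂ) ≠ 0 := by exact_mod_cast hg0.ne'
    have hxC : (x:ℂ) ≠ 0 := by exact_mod_cast hx.ne'
    have hexp : Real.exp (ψ x) = g * g := by
      rw [hg, ← Real.exp_add]; ring_nf
    have hexp' : Real.exp (-ψ x) = 1 / (g * g) := by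
      rw [Real.exp_neg, hexp]; field_simp
    rw [Real.sinh_eq, hexp, hexp']
    have hrw : (Complex.I * ((g * (p / 2) : ℝ) : ℂ)) ^ 2 / (Complex.I * (g:ℂ))
          - (Complex.I * ((g * (p / 2) : ℝ) : ℂ)) / (x:ℂ)
          + 4 * (Complex.I * (g:ℂ)) ^ 3 - 4 / (Complex.I * (g:ℂ))
        = Complex.I * (((g * (p/2)) * (p/2) - g * (p/2) / x - 4 * g^3 + 4 / g : ℝ) : ℂ) := by
      have h3 : Complex.I ^ 3 = -Complex.I := by
        rw [pow_succ, Complex.I_sq]; ring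
      push_cast
      rw [← div_div, Complex.div_I]
      rw [← div_div, Complex.div_I]
      rw [mul_pow, Complex.I_sq]
      rw [mul_pow Complex.I ((g:ℝ):ℂ) 3, h3]
      field_simp
      ring
    rw [hrw] at hE
    have hreal := Complex.ofReal_injective (mul_left_cancel₀ Complex.I_ne_zero hE)
    have hx0 : x ≠ 0 := hx.ne'
    have hgne : g ≠ 0 := hg0.ne'
    field_simp at hreal ⊢
    linear_combination hreal
  · intro x hx
    rw [hval x hx]
    exact mul_ne_zero Complex.I_ne_zero (by exact_mod_cast (Real.exp_pos _).ne')
  · intro x hx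
    rw [hder x hx]
    constructor <;> intro h <;>
      simpa [-Complex.ofReal_exp] using congrArg Complex.re h
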